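/- Let ν = 10(c_3…c_{n+2})^∞ with #_1(c_3…c_{n+2}) odd and c_{n+2} = 1. Assume c_{n+1} = 1 and that c_j^* c_{j+1}…c_{n+2}(c_3…c_{n+2})^M c_3…c_i is admissible for every j ∈ {3,…,n+1}, every M ∈ ℕ and relevant i. Then there exists no left-infinite sequence L making any folding point of X' a Type 3 folding point; in particular the candidate sequence L = (c_3…c_n 0 0)^∞ l_k…l_1 contains the non-admissible subword 0 0 c_3…c_n. -/

import Mathlib

/-- number of `true`s among `s 0, …, s (k-1)` (i.e. `#₁(s_k … s_1)` for a
left-infinite sequence `…s₂s₁` coded by `s : ℕ → Bool` with `s 0 = s₁`). -/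
def cnt (s : ℕ → Bool) (k : ℕ) : ℕ :=
  ((Finset.range k).filter (fun i => s i = true)).card

/-- parity-lexicographic strict order on finite binary words. -/
def plLt (s t : List Bool) : Prop :=
  ∃ k, k < s.length ∧ k < t.length ∧ s.take k = t.take k ∧
    s.getD k false ≠ t.getD k false ∧
    ((s.getD k false = false ∧ Even ((s.take k).count true)) ∨
     (s.getD k false = true ∧ Odd ((s.take k).count true)))

def plLe (s t : List Bool) : Prop := s = t ∨ plLt s t

/-- the word `c_{start+1} … c_{start+len}` of the kneading sequence `ν`
(where `c_{i+1} = ν i`). -/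
def nuWord (ν : ℕ → Bool) (start len : ℕ) : List Bool :=
  (List.range len).map (fun j => ν (start + j))

/-- `a = a₁…a_n` is admissible w.r.t. the kneading sequence `ν`:
`c₂…c_{2+n-i} ⪯ a_i…a_n ⪯ c₁…c_{1+n-i}` for all `i`. -/
def AdmissibleWord (ν : ℕ → Bool) (a : List Bool) : Prop :=
  ∀ i, i < a.length →
    plLe (nuWord ν 1 (a.length - i)) (a.drop i) ∧
    plLe (a.drop i) (nuWord ν 0 (a.length - i))

/-- `ν` is an admissible kneading sequence: all of its finite subwords are admissible. -/
def AdmissibleSeq (ν : ℕ → Bool) : Prop :=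
  ∀ k len, AdmissibleWord ν (nuWord ν k len)

/-- the finite subword `s_{k+len} … s_{k+1}` (read forward in time, i.e. with
decreasing index) of the left-infinite sequence `…s₂s₁` coded by `s` (`s 0 = s₁`). -/
def leftWord (s : ℕ → Bool) (k len : ℕ) : List Bool :=
  ((List.range len).map (fun j => s (k + j))).reverse

/-- a left-infinite sequence is admissible iff all of its finite subwords are. -/
def AdmissibleLeft (ν : ℕ → Bool) (s : ℕ → Bool) : Prop :=
  ∀ k len, AdmissibleWord ν (leftWord s k len)

/-- the order `≺_L` on left-infinite sequences determined by `L = …l₂l₁`. -/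
def ltL (L s t : ℕ → Bool) : Prop :=
  ∃ k, (∀ i, i < k → s i = t i) ∧ s k ≠ t k ∧
    ((t k = L k ∧ Even (cnt s k + cnt L k)) ∨
     (s k = L k ∧ ¬ Even (cnt s k + cnt L k)))

/-- the forward word `c_j^* c_{j+1}…c_{n+2} (c_3…c_{n+2})^t c_3…c_{r+2}`
(itinerary suffix of a "long" basic arc near the folding point). -/
def fwLong (ν : ℕ → Bool) (n j t r : ℕ) : List Bool :=
  [!(ν (j - 1))] ++ nuWord ν j (n + 2 - j) ++
    (List.replicate t (nuWord ν 2 n)).flatten ++ nuWord ν 2 r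

/-- the forward word `0 (c_3…c_{n+2})^t c_3…c_{r+2}`
(itinerary suffix of a "left/right" basic arc near the folding point). -/
def fwSide (ν : ℕ → Bool) (n t r : ℕ) : List Bool :=
  [false] ++ (List.replicate t (nuWord ν 2 n)).flatten ++ nuWord ν 2 r

/-- the left-infinite sequence `…s₂s₁` ends (on the right) with the forward word `w`. -/
def EndsWithWord (t : ℕ → Bool) (w : List Bool) : Prop :=
  ∀ j, j < w.length → t j = w.getD (w.length - 1 - j) true

/-- the backward itinerary `(c_3…c_{n+2})^∞ c_3…c_{r+2}` of the folding point `p`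
(where `i = r + 2`). -/
def pseq (ν : ℕ → Bool) (n r : ℕ) : ℕ → Bool :=
  fun j => ν (2 + (((r : ℤ) - 1 - (j : ℤ)) % (n : ℤ)).toNat)

/-- the symbolic characterization of a Type 3 folding point (Lemma 7.15):
there is `M > 0` such that all long basic arcs near `A(←p)` lie on one side of it
(w.r.t. `≺_L`), while the side arcs `…0(c_3…c_{n+2})^{M+N'}c_3…c_i` lie on the
other side for infinitely many even and infinitely many odd `N'`
(or the same with all inequalities reversed). -/
def Type3Cond (ν : ℕ → Bool) (n : ℕ) (L : ℕ → Bool) (r : ℕ) : Prop :=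
  ∃ M : ℕ, 0 < M ∧
    (((∀ N j, 1 ≤ N → 3 ≤ j → j ≤ n + 1 → AdmissibleWord ν (fwLong ν n j (M + N) r) →
        ∀ t, AdmissibleLeft ν t → EndsWithWord t (fwLong ν n j (M + N) r) →
          ltL L t (pseq ν n r)) ∧
      (∀ N0, ∃ N', N0 ≤ N' ∧ Even N' ∧
        ∀ t, AdmissibleLeft ν t → EndsWithWord t (fwSide ν n (M + N') r) →
          ltL L (pseq ν n r) t) ∧
      (∀ N0, ∃ N', N0 ≤ N' ∧ Odd N' ∧
        ∀ t, AdmissibleLeft ν t → EndsWithWord t (fwSide ν n (M + N') r) →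
          ltL L (pseq ν n r) t)) ∨
     ((∀ N j, 1 ≤ N → 3 ≤ j → j ≤ n + 1 → AdmissibleWord ν (fwLong ν n j (M + N) r) →
        ∀ t, AdmissibleLeft ν t → EndsWithWord t (fwLong ν n j (M + N) r) →
          ltL L (pseq ν n r) t) ∧
      (∀ N0, ∃ N', N0 ≤ N' ∧ Even N' ∧
        ∀ t, AdmissibleLeft ν t → EndsWithWord t (fwSide ν n (M + N') r) →
          ltL L t (pseq ν n r)) ∧
      (∀ N0, ∃ N', N0 ≤ N' ∧ Odd N' ∧
        ∀ t, AdmissibleLeft ν t → EndsWithWord t (fwSide ν n (M + N') r) →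
          ltL L t (pseq ν n r))))


section Basics

variable {ν : ℕ → Bool}

theorem nuWord_length (ν : ℕ → Bool) (s ℓ : ℕ) : (nuWord ν s ℓ).length = ℓ := by
  simp [nuWord]

theorem nuWord_getD (ν : ℕ → Bool) {s ℓ m : ℕ} (h : m < ℓ) (d : Bool) :
    (nuWord ν s ℓ).getD m d = ν (s + m) := by
  simp [nuWord, List.getD_eq_getElem?_getD, List.getElem?_map, List.getElem?_range h]

theorem nuWord_take (ν : ℕ → Bool) (s ℓ m : ℕ) :
    (nuWord ν s ℓ).take m = nuWord ν s (min m ℓ) := by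
  simp [nuWord, ← List.map_take, List.take_range]

theorem nuWord_succ (ν : ℕ → Bool) (s ℓ : ℕ) :
    nuWord ν s (ℓ + 1) = ν s :: nuWord ν (s + 1) ℓ := by
  simp only [nuWord, List.range_succ_eq_map, List.map_cons, List.map_map, Nat.add_zero]
  congr 1
  apply List.map_congr_left
  intro i _
  exact congrArg ν (by omega)

theorem plLe_take {a b : List Bool} (h : plLe a b) (m : ℕ) :
    plLe (a.take m) (b.take m) := by
  rcases h with h | ⟨k, hks, hkt, htake, hne, hcond⟩
  · left; rw [h]
  rcases lt_or_ge k m with hkm | hkm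
  · right
    refine ⟨k, by simp; omega, by simp; omega, ?_, ?_, ?_⟩
    · rw [List.take_take, List.take_take, min_eq_left hkm.le, htake]
    · rwa [List.getD_eq_getElem?_getD, List.getElem?_take, if_pos hkm,
        List.getD_eq_getElem?_getD (l := b.take m), List.getElem?_take, if_pos hkm,
        ← List.getD_eq_getElem?_getD, ← List.getD_eq_getElem?_getD]
    · rwa [List.getD_eq_getElem?_getD, List.getElem?_take, if_pos hkm,
        ← List.getD_eq_getElem?_getD, List.take_take, min_eq_left hkm.le]
  · left
    rw [← min_eq_left hkm, ← List.take_take, htake, List.take_take, min_eq_left hkm]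

theorem AdmissibleWord_drop {a : List Bool} (h : AdmissibleWord ν a) (i : ℕ) :
    AdmissibleWord ν (a.drop i) := by
  intro i' hi'
  rw [List.length_drop] at hi'
  have := h (i + i') (by omega)
  rw [List.drop_drop, List.length_drop, Nat.sub_sub]
  exact this

theorem AdmissibleWord_take {a : List Bool} (h : AdmissibleWord ν a) (m : ℕ) :
    AdmissibleWord ν (a.take m) := by
  intro i hi
  rw [List.length_take] at hi
  have hbase := h i (by omega)
  have h1 := plLe_take hbase.1 (m - i)
  have h2 := plLe_take hbase.2 (m - i)
  rw [nuWord_take] at h1 h2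
  rw [List.length_take, List.drop_take]
  have hmin : min (m - i) (a.length - i) = min m a.length - i := by omega
  rw [hmin] at h1 h2
  exact ⟨h1, h2⟩

theorem AdmissibleWord_nil : AdmissibleWord ν ([] : List Bool) := by
  intro i hi; simp at hi

end Basics

section Ext

variable {ν : ℕ → Bool}

theorem getD_cons_succ' (x : Bool) (l : List Bool) (k : ℕ) (d : Bool) :
    (x :: l).getD (k + 1) d = l.getD k d := rfl

theorem AdmissibleWord_cons_true (h0 : ν 0 = true) (h1 : ν 1 = false)
    {a : List Bool} (h : AdmissibleWord ν a) : AdmissibleWord ν (true :: a) := by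
  intro i hi
  cases i with
  | succ i =>
    simp only [List.length_cons] at hi
    have := h i (by omega)
    simpa [Nat.succ_sub_succ] using this
  | zero =>
    simp only [List.drop_zero, List.length_cons, Nat.sub_zero]
    constructor
    · -- lower bound
      right
      refine ⟨0, by simp [nuWord_length], by simp, by simp, ?_, ?_⟩
      · rw [nuWord_getD ν (by omega)]
        simp [h1]
      · left
        constructor
        · rw [nuWord_getD ν (by omega)]; simpa using h1
        · simp
    · -- upper bound
      have hup : nuWord ν 0 (a.length + 1) = true :: nuWord ν 1 a.length := by
        rw [nuWord_succ, h0]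
      rw [hup]
      rcases Nat.eq_zero_or_pos a.length with hz | hpos
      · rw [List.length_eq_zero_iff.mp hz]
        left; rfl
      have hlow : plLe (nuWord ν 1 a.length) a := by
        simpa using (h 0 hpos).1
      rcases hlow with heq | ⟨k, hk1, hk2, htake, hne, hcond⟩
      · left; rw [heq]
      · right
        rw [nuWord_length] at hk1
        refine ⟨k + 1, by simpa using hk2, by simp [nuWord_length]; omega, ?_, ?_, ?_⟩
        · simp only [List.take_succ_cons]
          rw [htake]
        · rw [getD_cons_succ', getD_cons_succ']
          exact hne.symm
        · have hcount : ((true :: a).take (k + 1)).count true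
              = (a.take k).count true + 1 := by
            simp [List.take_succ_cons, List.count_cons]
          have htcount : (a.take k).count true = ((nuWord ν 1 a.length).take k).count true := by
            rw [htake]
          rcases hcond with ⟨hv, hpar⟩ | ⟨hv, hpar⟩
          · -- nuWord value false, a value true
            right
            constructor
            · rw [getD_cons_succ']
              revert hne; rw [hv]
              cases a.getD k false <;> simp
            · rw [hcount, htcount]
              simpa [Nat.odd_add_one, Nat.even_add_one] using hpar
          · left
            constructor
            · rw [getD_cons_succ']
              revert hne; rw [hv]
              cases a.getD k false <;> simp
            · rw [hcount, htcount]
              simpa [Nat.even_add_one] using hpar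

/-- left-infinite extension of a finite word by `true`s. -/
def extw (w : List Bool) : ℕ → Bool :=
  fun j => if j < w.length then w.getD (w.length - 1 - j) true else true

theorem extw_ends (w : List Bool) : EndsWithWord (extw w) w := by
  intro j hj
  simp [extw, hj]

theorem leftWord_length (s : ℕ → Bool) (k len : ℕ) : (leftWord s k len).length = len := by
  simp [leftWord]

theorem leftWord_succ (s : ℕ → Bool) (k len : ℕ) :
    leftWord s k (len + 1) = s (k + len) :: leftWord s k len := by
  simp [leftWord, List.range_succ]

theorem leftWord_getD (s : ℕ → Bool) {k len i : ℕ} (h : i < len) (d : Bool) :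
    (leftWord s k len).getD i d = s (k + (len - 1 - i)) := by
  rw [leftWord, List.getD_eq_getElem?_getD, List.getElem?_reverse (by simpa using h)]
  simp only [List.length_map, List.length_range]
  rw [List.getElem?_map, List.getElem?_range (by omega)]
  simp

theorem leftWord_subword {w : List Bool} {k len : ℕ} (h : k + len ≤ w.length) :
    leftWord (extw w) k len = (w.drop (w.length - (k + len))).take len := by
  apply List.ext_getElem
  · simp [leftWord_length]; omega
  · intro i hi1 hi2
    rw [leftWord_length] at hi1
    rw [← List.getD_eq_getElem _ true, ← List.getD_eq_getElem _ true, leftWord_getD _ hi1]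
    have hik : k + (len - 1 - i) < w.length := by omega
    rw [List.getD_eq_getElem?_getD, List.getElem?_take, if_pos hi1, List.getElem?_drop,
      ← List.getD_eq_getElem?_getD]
    simp only [extw, if_pos hik]
    congr 1
    omega

theorem AdmissibleLeft_extw (h0 : ν 0 = true) (h1 : ν 1 = false)
    {w : List Bool} (hw : AdmissibleWord ν w) : AdmissibleLeft ν (extw w) := by
  intro k len
  induction len with
  | zero =>
    have : leftWord (extw w) k 0 = [] := by simp [leftWord]
    rw [this]; exact AdmissibleWord_nil
  | succ len ih =>
    rcases lt_or_ge (k + len) w.length with hlt | hle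
    · rw [leftWord_subword (by omega)]
      exact AdmissibleWord_take (AdmissibleWord_drop hw _) _
    · rw [leftWord_succ]
      have : extw w (k + len) = true := by
        simp [extw, Nat.not_lt.mpr hle]
      rw [this]
      exact AdmissibleWord_cons_true h0 h1 ih

end Ext

section Words

variable {ν : ℕ → Bool}

theorem cnt_succ (s : ℕ → Bool) (k : ℕ) :
    cnt s (k + 1) = cnt s k + (if s k then 1 else 0) := by
  unfold cnt
  rw [Finset.range_add_one, Finset.filter_insert]
  by_cases h : s k <;> simp [h, Finset.card_insert_of_notMem]

theorem cnt_extw (w : List Bool) {k : ℕ} (hk : k ≤ w.length) :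
    cnt (extw w) k = ((w.drop (w.length - k)).count true) := by
  induction k with
  | zero => simp [cnt]
  | succ k ih =>
    rw [cnt_succ, ih (by omega)]
    have h1 : w.length - (k+1) < w.length := by omega
    rw [List.drop_eq_getElem_cons h1]
    have h2 : w.length - (k+1) + 1 = w.length - k := by omega
    rw [h2, List.count_cons]
    have : extw w k = w[w.length - (k+1)] := by
      simp only [extw, if_pos (by omega : k < w.length)]
      rw [List.getD_eq_getElem _ _ (by omega)]
      congr 1
      omega
    rw [this]
    by_cases hb : w[w.length - (k+1)] = true <;> simp [hb] <;> omega

theorem flatten_replicate_length (blk : List Bool) (T : ℕ) :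
    ((List.replicate T blk).flatten).length = T * blk.length := by
  induction T with
  | zero => simp
  | succ T ih => simp [List.replicate_succ, ih]; ring

theorem flatten_replicate_count (blk : List Bool) (T : ℕ) :
    ((List.replicate T blk).flatten).count true = T * blk.count true := by
  induction T with
  | zero => simp
  | succ T ih => simp [List.replicate_succ, ih]; ring

theorem flatten_replicate_getD (blk : List Bool) (T : ℕ) {b : ℕ}
    (hb : b < T * blk.length) (d : Bool) :
    ((List.replicate T blk).flatten).getD b d = blk.getD (b % blk.length) d := by
  induction T generalizing b with
  | zero => omega
  | succ T ih =>
    rw [Nat.succ_mul] at hb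
    rw [List.replicate_succ, List.flatten_cons]
    rcases lt_or_ge b blk.length with h | h
    · rw [List.getD_append _ _ _ _ h, Nat.mod_eq_of_lt h]
    · rw [List.getD_append_right _ _ _ _ h, ih (by omega)]
      congr 1
      conv_rhs => rw [show b = (b - blk.length) + blk.length by omega]
      rw [Nat.add_mod_right]

theorem nuWord_count_cons (ν : ℕ → Bool) (s ℓ : ℕ) :
    (nuWord ν s (ℓ + 1)).count true
      = (if ν s then 1 else 0) + (nuWord ν (s+1) ℓ).count true := by
  rw [nuWord_succ, List.count_cons]
  by_cases h : ν s <;> simp [h] <;> omega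

end Words

section FW

variable {ν : ℕ → Bool} {n : ℕ}

theorem fwLong_length (ν : ℕ → Bool) (n j T r : ℕ) :
    (fwLong ν n j T r).length = 1 + (n + 2 - j) + T * n + r := by
  simp [fwLong, nuWord_length, flatten_replicate_length]
  ring

theorem fwSide_length (ν : ℕ → Bool) (n T r : ℕ) :
    (fwSide ν n T r).length = 1 + T * n + r := by
  simp [fwSide, nuWord_length, flatten_replicate_length]
  ring

theorem fwLong_getD_zero (ν : ℕ → Bool) (n j T r : ℕ) (d : Bool) :
    (fwLong ν n j T r).getD 0 d = !(ν (j - 1)) := by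
  simp [fwLong]

theorem fwSide_getD_zero (ν : ℕ → Bool) (n T r : ℕ) (d : Bool) :
    (fwSide ν n T r).getD 0 d = false := by
  simp [fwSide]

theorem fwLong_getD (hper : ∀ k, ν (2 + k) = ν (2 + k % n))
    {j T r m : ℕ} (hj1 : 3 ≤ j) (hj2 : j ≤ n + 1) (hr : r ≤ n)
    (hm1 : 1 ≤ m) (hm2 : m ≤ (n + 2 - j) + T * n + r) (d : Bool) :
    (fwLong ν n j T r).getD m d = ν (j - 1 + m) := by
  have hn : 1 ≤ n := by omega
  rw [fwLong]
  rw [show ([!ν (j-1)] ++ nuWord ν j (n+2-j) ++ (List.replicate T (nuWord ν 2 n)).flatten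
      ++ nuWord ν 2 r)
    = (!ν (j-1)) :: (nuWord ν j (n+2-j) ++ ((List.replicate T (nuWord ν 2 n)).flatten
      ++ nuWord ν 2 r)) by simp]
  obtain ⟨m', rfl⟩ : ∃ m', m = m' + 1 := ⟨m - 1, by omega⟩
  rw [getD_cons_succ']
  rcases lt_or_ge m' (n + 2 - j) with hA | hA
  · rw [List.getD_append _ _ _ _ (by rw [nuWord_length]; exact hA), nuWord_getD ν hA]
    congr 1
    omega
  · rw [List.getD_append_right _ _ _ _ (by rw [nuWord_length]; exact hA), nuWord_length]
    set b := m' - (n + 2 - j) with hbdef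
    rcases lt_or_ge b (T * n) with hB | hB
    · rw [List.getD_append _ _ _ _ (by rw [flatten_replicate_length, nuWord_length]; exact hB)]
      rw [flatten_replicate_getD _ _ (by rw [nuWord_length]; exact hB), nuWord_length,
        nuWord_getD ν (Nat.mod_lt _ (by omega))]
      have h1 : j - 1 + (m' + 1) = 2 + (n + b) := by omega
      rw [h1, hper (n + b)]
      congr 2
      conv_rhs => rw [show n + b = b + 1 * n by ring]
      rw [Nat.add_mul_mod_self_right]
    · rw [List.getD_append_right _ _ _ _ (by rw [flatten_replicate_length, nuWord_length]; exact hB),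
        flatten_replicate_length, nuWord_length]
      set e := b - T * n with hedef
      have he : e < r := by omega
      rw [nuWord_getD ν he]
      have h1 : j - 1 + (m' + 1) = 2 + (n + T * n + e) := by omega
      rw [h1, hper (n + T * n + e)]
      congr 2
      conv_rhs => rw [show n + T * n + e = e + (T+1) * n by ring]
      rw [Nat.add_mul_mod_self_right, Nat.mod_eq_of_lt (by omega)]

theorem fwSide_getD (hper : ∀ k, ν (2 + k) = ν (2 + k % n)) (hn : 1 ≤ n)
    {T r m : ℕ} (hr : r ≤ n) (hm1 : 1 ≤ m) (hm2 : m ≤ T * n + r) (d : Bool) :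
    (fwSide ν n T r).getD m d = ν (2 + (m - 1) % n) := by
  rw [fwSide]
  rw [show ([false] ++ (List.replicate T (nuWord ν 2 n)).flatten ++ nuWord ν 2 r)
    = false :: ((List.replicate T (nuWord ν 2 n)).flatten ++ nuWord ν 2 r) by simp]
  obtain ⟨b, rfl⟩ : ∃ b, m = b + 1 := ⟨m - 1, by omega⟩
  rw [getD_cons_succ']
  simp only [Nat.add_sub_cancel]
  rcases lt_or_ge b (T * n) with hB | hB
  · rw [List.getD_append _ _ _ _ (by rw [flatten_replicate_length, nuWord_length]; exact hB)]
    rw [flatten_replicate_getD _ _ (by rw [nuWord_length]; exact hB), nuWord_length,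
      nuWord_getD ν (Nat.mod_lt _ (by omega))]
  · rw [List.getD_append_right _ _ _ _ (by rw [flatten_replicate_length, nuWord_length]; exact hB),
      flatten_replicate_length, nuWord_length]
    set e := b - T * n with hedef
    have he : e < r := by omega
    rw [nuWord_getD ν he]
    congr 2
    conv_rhs => rw [show b = e + T * n by omega]
    rw [Nat.add_mul_mod_self_right, Nat.mod_eq_of_lt (by omega)]

theorem fwLong_drop_one_count (ν : ℕ → Bool) (n j T r : ℕ) :
    ((fwLong ν n j T r).drop 1).count true
      = (nuWord ν j (n + 2 - j)).count true + T * ((nuWord ν 2 n).count true)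
        + (nuWord ν 2 r).count true := by
  rw [fwLong]
  rw [show ([!ν (j-1)] ++ nuWord ν j (n+2-j) ++ (List.replicate T (nuWord ν 2 n)).flatten
      ++ nuWord ν 2 r)
    = (!ν (j-1)) :: (nuWord ν j (n+2-j) ++ ((List.replicate T (nuWord ν 2 n)).flatten
      ++ nuWord ν 2 r)) by simp]
  rw [List.drop_one, List.tail_cons, List.count_append, List.count_append,
    flatten_replicate_count]
  ring

theorem fwSide_drop_one_count (ν : ℕ → Bool) (n T r : ℕ) :
    ((fwSide ν n T r).drop 1).count true
      = T * ((nuWord ν 2 n).count true) + (nuWord ν 2 r).count true := by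
  rw [fwSide]
  rw [show ([false] ++ (List.replicate T (nuWord ν 2 n)).flatten ++ nuWord ν 2 r)
    = false :: ((List.replicate T (nuWord ν 2 n)).flatten ++ nuWord ν 2 r) by simp]
  rw [List.drop_one, List.tail_cons, List.count_append, flatten_replicate_count]

theorem pseq_spec (hn : 1 ≤ n) {r i K : ℕ} (hi : i + 1 ≤ n * K + r) :
    pseq ν n r i = ν (2 + (n * K + r - 1 - i) % n) := by
  unfold pseq
  congr 2
  have hcast : ((r : ℤ) - 1 - (i : ℤ)) % (n : ℤ)
      = ((n * K + r - 1 - i : ℕ) : ℤ) % (n : ℤ) := by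
    have h1 : ((n * K + r - 1 - i : ℕ) : ℤ) = (n : ℤ) * K + r - 1 - i := by
      push_cast [Nat.sub_sub]
      omega
    rw [h1, show (n : ℤ) * K + r - 1 - i = (r - 1 - i) + (K : ℤ) * n by ring,
      Int.add_mul_emod_self_right]
  rw [hcast]
  omega

theorem pseq_spec' (hper : ∀ k, ν (2 + k) = ν (2 + k % n)) (hn : 1 ≤ n)
    {r i K : ℕ} (hi : i + 1 ≤ n * K + r) :
    pseq ν n r i = ν (2 + (n * K + r - 1 - i)) := by
  rw [pseq_spec hn hi, ← hper]

end FW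

section Parity

variable {ν : ℕ → Bool} {n : ℕ}

theorem cnt_congr {s t : ℕ → Bool} {k : ℕ} (h : ∀ i, i < k → s i = t i) :
    cnt s k = cnt t k := by
  unfold cnt
  apply Finset.card_bij (fun a _ => a)
  · intro a ha
    simp only [Finset.mem_filter, Finset.mem_range] at *
    exact ⟨ha.1, by rw [← h a ha.1]; exact ha.2⟩
  · intro a ha b hb hab; exact hab
  · intro b hb
    simp only [Finset.mem_filter, Finset.mem_range] at *
    exact ⟨b, ⟨hb.1, by rw [h b hb.1]; exact hb.2⟩, rfl⟩

theorem ltL_parity {L s t : ℕ → Bool} {k₀ : ℕ}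
    (hag : ∀ i, i < k₀ → s i = t i) (hne : s k₀ ≠ t k₀) (h : ltL L s t) :
    (cnt s k₀ + cnt L (k₀ + 1) + (if t k₀ then 1 else 0)) % 2 = 0 := by
  obtain ⟨k, hpre, hkne, hcond⟩ := h
  have hk : k = k₀ := by
    rcases lt_trichotomy k k₀ with hlt | he | hgt
    · exact absurd (hag k hlt) hkne
    · exact he
    · exact absurd (hpre k₀ hgt) hne
  subst hk
  rw [cnt_succ]
  rcases hcond with ⟨hv, hp⟩ | ⟨hv, hp⟩
  · rw [Nat.even_iff] at hp
    rw [← hv]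
    cases ht : t k <;> simp [ht] at * <;> omega
  · rw [Nat.not_even_iff] at hp
    rw [← hv]
    have : t k = !(s k) := by
      cases hs : s k <;> cases ht : t k <;> simp_all
    rw [this]
    cases hs : s k <;> simp [hs] at * <;> omega

end Parity

section Agree

variable {ν : ℕ → Bool} {n : ℕ}

theorem long_agree (hper : ∀ k, ν (2 + k) = ν (2 + k % n))
    {j T r : ℕ} (hj1 : 3 ≤ j) (hj2 : j ≤ n + 1) (hr1 : 1 ≤ r) (hr2 : r ≤ n) :
    ∀ i, i < (n + 2 - j) + T * n + r →
      extw (fwLong ν n j T r) i = pseq ν n r i := by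
  intro i hi
  have hn : 1 ≤ n := by omega
  have hlen : (fwLong ν n j T r).length = 1 + (n + 2 - j) + T * n + r :=
    fwLong_length ν n j T r
  have hi' : i < (fwLong ν n j T r).length := by omega
  rw [extw, if_pos hi']
  set k₀ := (n + 2 - j) + T * n + r with hk₀
  have hm : (fwLong ν n j T r).length - 1 - i = k₀ - i := by omega
  rw [hm, fwLong_getD hper hj1 hj2 hr2 (by omega) (by omega)]
  rw [pseq_spec' hper hn (K := T + 1) (by rw [Nat.mul_comm n (T+1), Nat.succ_mul]; omega)]
  congr 1
  have h1 : n * (T + 1) = T * n + n := by ring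
  omega

theorem long_k0_left (ν : ℕ → Bool) (n : ℕ) {j T r : ℕ} (hj2 : j ≤ n + 2) (hr1 : 1 ≤ r) :
    extw (fwLong ν n j T r) ((n + 2 - j) + T * n + r) = !(ν (j - 1)) := by
  have hlen : (fwLong ν n j T r).length = 1 + (n + 2 - j) + T * n + r :=
    fwLong_length ν n j T r
  rw [extw, if_pos (by omega)]
  rw [show (fwLong ν n j T r).length - 1 - ((n + 2 - j) + T * n + r) = 0 by omega]
  exact fwLong_getD_zero ν n j T r true

theorem long_k0_right (hper : ∀ k, ν (2 + k) = ν (2 + k % n))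
    {j T r : ℕ} (hj1 : 3 ≤ j) (hj2 : j ≤ n + 1) (hr1 : 1 ≤ r) (hr2 : r ≤ n) :
    pseq ν n r ((n + 2 - j) + T * n + r) = ν (j - 1) := by
  have hn : 1 ≤ n := by omega
  rw [pseq_spec' hper hn (K := T + 1) (by rw [Nat.mul_comm n (T+1), Nat.succ_mul]; omega)]
  congr 1
  have h1 : n * (T + 1) = T * n + n := by ring
  omega

theorem side_agree (hper : ∀ k, ν (2 + k) = ν (2 + k % n)) (hn : 1 ≤ n)
    {T r : ℕ} (hr1 : 1 ≤ r) (hr2 : r ≤ n) :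
    ∀ i, i < T * n + r → extw (fwSide ν n T r) i = pseq ν n r i := by
  intro i hi
  have hlen : (fwSide ν n T r).length = 1 + T * n + r := fwSide_length ν n T r
  rw [extw, if_pos (by omega)]
  set k₀ := T * n + r with hk₀
  rw [show (fwSide ν n T r).length - 1 - i = k₀ - i by omega]
  rw [fwSide_getD hper hn hr2 (by omega) (by omega)]
  rw [pseq_spec hn (K := T + 1) (by rw [Nat.mul_comm n (T+1), Nat.succ_mul]; omega)]
  congr 2
  have h1 : n * (T + 1) = T * n + n := by ring
  rw [show n * (T + 1) + r - 1 - i = (k₀ - i - 1) + n by omega]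
  rw [Nat.add_mod_right]

theorem side_k0_left (ν : ℕ → Bool) (n : ℕ) {T r : ℕ} (hr1 : 1 ≤ r) :
    extw (fwSide ν n T r) (T * n + r) = false := by
  have hlen : (fwSide ν n T r).length = 1 + T * n + r := fwSide_length ν n T r
  rw [extw, if_pos (by omega)]
  rw [show (fwSide ν n T r).length - 1 - (T * n + r) = 0 by omega]
  exact fwSide_getD_zero ν n T r true

theorem side_k0_right (hper : ∀ k, ν (2 + k) = ν (2 + k % n)) (hn : 1 ≤ n)
    (hlast : ν (n + 1) = true) {T r : ℕ} (hr1 : 1 ≤ r) (hr2 : r ≤ n) :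
    pseq ν n r (T * n + r) = true := by
  rw [pseq_spec' hper hn (K := T + 1) (by rw [Nat.mul_comm n (T+1), Nat.succ_mul]; omega)]
  rw [show 2 + (n * (T + 1) + r - 1 - (T * n + r)) = n + 1 by
    have h1 : n * (T + 1) = T * n + n := by ring
    omega]
  exact hlast

theorem fwSide_eq_nuWord (hper : ∀ k, ν (2 + k) = ν (2 + k % n)) (hn : 1 ≤ n)
    (h1 : ν 1 = false) {T r : ℕ} (hr2 : r ≤ n) :
    fwSide ν n T r = nuWord ν 1 (1 + T * n + r) := by
  apply List.ext_getElem
  · rw [fwSide_length, nuWord_length]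
  · intro i hi1 hi2
    rw [fwSide_length] at hi1
    rw [← List.getD_eq_getElem _ true, ← List.getD_eq_getElem _ true,
      nuWord_getD ν (by omega)]
    cases Nat.eq_zero_or_pos i with
    | inl h => subst h; rw [fwSide_getD_zero]; exact h1.symm
    | inr hpos =>
      rw [fwSide_getD hper hn hr2 hpos (by omega)]
      rw [show 1 + i = 2 + (i - 1) by omega, hper (i - 1)]

end Agree

section NotAdm

variable {ν : ℕ → Bool} {n : ℕ}

theorem getD_take_of_lt (l : List Bool) {k m : ℕ} (h : m < k) (d : Bool) :
    (l.take k).getD m d = l.getD m d := by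
  rw [List.getD_eq_getElem?_getD, List.getElem?_take, if_pos h, ← List.getD_eq_getElem?_getD]

theorem not_adm_word (hn : 2 ≤ n) (h1 : ν 1 = false) (hctrue : ν n = true) :
    ¬ AdmissibleWord ν ([false, false] ++ nuWord ν 2 (n - 2)) := by
  intro hA
  set w : List Bool := [false, false] ++ nuWord ν 2 (n - 2) with hw
  have hcons : w = false :: false :: nuWord ν 2 (n - 2) := by simp [hw]
  have hwlen : w.length = n := by
    simp [hw, nuWord_length]
    omega
  have hwgetD : ∀ i, i < n → w.getD i false = if i ≤ 1 then false else ν i := by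
    intro i hin
    rcases lt_or_ge i 2 with hi2 | hi2
    · interval_cases i <;> simp [hcons]
    · obtain ⟨i', rfl⟩ : ∃ i', i = i' + 2 := ⟨i - 2, by omega⟩
      rw [hcons, getD_cons_succ' _ _ (i' + 1), getD_cons_succ' _ _ i',
        nuWord_getD ν (by omega)]
      rw [if_neg (by omega)]
      congr 1
      omega
  have hex : ∃ i, ν (1 + i) = true := ⟨n - 1, by rw [show 1 + (n-1) = n by omega]; exact hctrue⟩
  set m := Nat.find hex with hmdef
  have hm : ν (1 + m) = true := Nat.find_spec hex
  have hmin : ∀ i, i < m → ν (1 + i) = false := by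
    intro i hi
    have := Nat.find_min hex hi
    simpa using this
  have hm1 : 1 ≤ m := by
    rcases Nat.eq_zero_or_pos m with h | h
    · rw [h] at hm
      rw [show (1 + 0) = 1 by rfl, h1] at hm
      exact absurd hm (by simp)
    · exact h
  have hm2 : m ≤ n - 1 := Nat.find_le (by rw [show 1 + (n-1) = n by omega]; exact hctrue)
  have hmn : m < n := by omega
  have hsgetD : ∀ i, i < n → (nuWord ν 1 n).getD i false = ν (1 + i) := by
    intro i hin; exact nuWord_getD ν hin false
  have hwFalse : ∀ i, i ≤ m → w.getD i false = false := by
    intro i hi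
    rw [hwgetD i (by omega)]
    rcases le_or_gt i 1 with h | h
    · rw [if_pos h]
    · rw [if_neg (by omega), show i = 1 + (i - 1) by omega]
      exact hmin (i - 1) (by omega)
  have hlow := (hA 0 (by rw [hwlen]; omega)).1
  rw [List.drop_zero, hwlen, Nat.sub_zero] at hlow
  rcases hlow with heq | ⟨k, hk1, hk2, htake, hne, hcond⟩
  · have := congrArg (fun l => l.getD m false) heq
    rw [hsgetD m hmn, hm, hwFalse m le_rfl] at this
    exact absurd this (by simp)
  · rw [nuWord_length] at hk1
    rw [hwlen] at hk2
    have hkm : k = m := by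
      rcases lt_trichotomy k m with hlt | he | hgt
      · rw [hsgetD k hk2, hwFalse k hlt.le, hmin k hlt] at hne
        exact absurd rfl hne
      · exact he
      · have := congrArg (fun l => l.getD m false) htake
        rw [getD_take_of_lt _ hgt, getD_take_of_lt _ hgt, hsgetD m hmn, hm,
          hwFalse m le_rfl] at this
        exact absurd this (by simp)
    subst hkm
    rcases hcond with ⟨hv, _⟩ | ⟨_, hodd'⟩
    · rw [hsgetD m hmn, hm] at hv
      exact absurd hv (by simp)
    · rw [nuWord_take, min_eq_left (by omega : m ≤ n)] at hodd'
      have hzero : (nuWord ν 1 m).count true = 0 := by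
        rw [List.count_eq_zero]
        intro hmem
        obtain ⟨i, hi, hfi⟩ := List.mem_map.mp hmem
        rw [List.mem_range] at hi
        rw [hmin i hi] at hfi
        exact absurd hfi (by simp)
      rw [hzero] at hodd'
      exact absurd hodd' (by simp)

end NotAdm

section Extract

variable {ν : ℕ → Bool} {n : ℕ}

theorem long_extract₁ (hper : ∀ k, ν (2 + k) = ν (2 + k % n))
    {L : ℕ → Bool} {j T r : ℕ} (hj1 : 3 ≤ j) (hj2 : j ≤ n + 1) (hr1 : 1 ≤ r) (hr2 : r ≤ n)
    (hlt : ltL L (extw (fwLong ν n j T r)) (pseq ν n r)) :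
    ((nuWord ν j (n + 2 - j)).count true + T * ((nuWord ν 2 n).count true)
      + (nuWord ν 2 r).count true + cnt L ((n + 2 - j) + T * n + r + 1)
      + (if ν (j - 1) then 1 else 0)) % 2 = 0 := by
  set w := fwLong ν n j T r with hwdef
  set k₀ := (n + 2 - j) + T * n + r with hk₀
  have hag := long_agree hper hj1 hj2 hr1 hr2 (T := T)
  have hL0 := long_k0_left ν n (j := j) (T := T) (r := r) (by omega) hr1
  have hR0 := long_k0_right hper hj1 hj2 hr1 hr2 (T := T)
  have hneq : extw w k₀ ≠ pseq ν n r k₀ := by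
    rw [hL0, hR0]; cases ν (j - 1) <;> simp
  have hpar := ltL_parity hag hneq hlt
  have hlen : w.length = 1 + (n + 2 - j) + T * n + r := fwLong_length ν n j T r
  have hcnt : cnt (extw w) k₀ = (nuWord ν j (n + 2 - j)).count true
      + T * ((nuWord ν 2 n).count true) + (nuWord ν 2 r).count true := by
    rw [cnt_extw w (by omega), show w.length - k₀ = 1 by omega]
    exact fwLong_drop_one_count ν n j T r
  rw [hcnt, hR0] at hpar
  exact hpar

theorem long_extract₂ (hper : ∀ k, ν (2 + k) = ν (2 + k % n))
    {L : ℕ → Bool} {j T r : ℕ} (hj1 : 3 ≤ j) (hj2 : j ≤ n + 1) (hr1 : 1 ≤ r) (hr2 : r ≤ n)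
    (hlt : ltL L (pseq ν n r) (extw (fwLong ν n j T r))) :
    ((nuWord ν j (n + 2 - j)).count true + T * ((nuWord ν 2 n).count true)
      + (nuWord ν 2 r).count true + cnt L ((n + 2 - j) + T * n + r + 1)
      + (if ν (j - 1) then 1 else 0) + 1) % 2 = 0 := by
  set w := fwLong ν n j T r with hwdef
  set k₀ := (n + 2 - j) + T * n + r with hk₀
  have hag := long_agree hper hj1 hj2 hr1 hr2 (T := T)
  have hL0 := long_k0_left ν n (j := j) (T := T) (r := r) (by omega) hr1
  have hR0 := long_k0_right hper hj1 hj2 hr1 hr2 (T := T)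
  have hneq : pseq ν n r k₀ ≠ extw w k₀ := by
    rw [hL0, hR0]; cases ν (j - 1) <;> simp
  have hpar := ltL_parity (fun i hi => (hag i hi).symm) hneq hlt
  have hlen : w.length = 1 + (n + 2 - j) + T * n + r := fwLong_length ν n j T r
  have hcnt : cnt (extw w) k₀ = (nuWord ν j (n + 2 - j)).count true
      + T * ((nuWord ν 2 n).count true) + (nuWord ν 2 r).count true := by
    rw [cnt_extw w (by omega), show w.length - k₀ = 1 by omega]
    exact fwLong_drop_one_count ν n j T r
  have hccongr : cnt (pseq ν n r) k₀ = cnt (extw w) k₀ :=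
    cnt_congr (fun i hi => (hag i hi).symm)
  rw [hccongr, hcnt, hL0] at hpar
  set S := (nuWord ν j (n + 2 - j)).count true + T * ((nuWord ν 2 n).count true)
      + (nuWord ν 2 r).count true + cnt L (k₀ + 1) with hSdef
  clear_value S
  cases hb : ν (j - 1) <;> simp [hb] at hpar ⊢ <;> omega

theorem side_extract₁ (hper : ∀ k, ν (2 + k) = ν (2 + k % n)) (hn : 1 ≤ n)
    (hlast : ν (n + 1) = true)
    {L : ℕ → Bool} {T r : ℕ} (hr1 : 1 ≤ r) (hr2 : r ≤ n)
    (hlt : ltL L (pseq ν n r) (extw (fwSide ν n T r))) :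
    (T * ((nuWord ν 2 n).count true) + (nuWord ν 2 r).count true
      + cnt L (T * n + r + 1)) % 2 = 0 := by
  set w := fwSide ν n T r with hwdef
  set k₀ := T * n + r with hk₀
  have hag := side_agree hper hn hr1 hr2 (T := T)
  have hL0 := side_k0_left ν n (T := T) (r := r) hr1
  have hR0 := side_k0_right hper hn hlast hr1 hr2 (T := T)
  have hneq : pseq ν n r k₀ ≠ extw w k₀ := by rw [hL0, hR0]; simp
  have hpar := ltL_parity (fun i hi => (hag i hi).symm) hneq hlt
  have hlen : w.length = 1 + T * n + r := fwSide_length ν n T r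
  have hcnt : cnt (extw w) k₀ = T * ((nuWord ν 2 n).count true)
      + (nuWord ν 2 r).count true := by
    rw [cnt_extw w (by omega), show w.length - k₀ = 1 by omega]
    exact fwSide_drop_one_count ν n T r
  have hccongr : cnt (pseq ν n r) k₀ = cnt (extw w) k₀ :=
    cnt_congr (fun i hi => (hag i hi).symm)
  rw [hccongr, hcnt, hL0] at hpar
  simpa using hpar

theorem side_extract₂ (hper : ∀ k, ν (2 + k) = ν (2 + k % n)) (hn : 1 ≤ n)
    (hlast : ν (n + 1) = true)
    {L : ℕ → Bool} {T r : ℕ} (hr1 : 1 ≤ r) (hr2 : r ≤ n)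
    (hlt : ltL L (extw (fwSide ν n T r)) (pseq ν n r)) :
    (T * ((nuWord ν 2 n).count true) + (nuWord ν 2 r).count true
      + cnt L (T * n + r + 1) + 1) % 2 = 0 := by
  set w := fwSide ν n T r with hwdef
  set k₀ := T * n + r with hk₀
  have hag := side_agree hper hn hr1 hr2 (T := T)
  have hL0 := side_k0_left ν n (T := T) (r := r) hr1
  have hR0 := side_k0_right hper hn hlast hr1 hr2 (T := T)
  have hneq : extw w k₀ ≠ pseq ν n r k₀ := by rw [hL0, hR0]; simp
  have hpar := ltL_parity hag hneq hlt
  have hlen : w.length = 1 + T * n + r := fwSide_length ν n T r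
  have hcnt : cnt (extw w) k₀ = T * ((nuWord ν 2 n).count true)
      + (nuWord ν 2 r).count true := by
    rw [cnt_extw w (by omega), show w.length - k₀ = 1 by omega]
    exact fwSide_drop_one_count ν n T r
  rw [hcnt, hR0] at hpar
  simpa using hpar

end Extract

section Combine

variable {ν : ℕ → Bool} {n : ℕ}

theorem bv_parity_false {x : Bool} (h : (if x then 1 else 0 : ℕ) % 2 = 0) : x = false := by
  cases x
  · rfl
  · simp at h

theorem bv_parity_eq {x y : Bool} (h : ((if x then 1 else 0) + (if y then 1 else 0) : ℕ) % 2 = 0) :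
    x = y := by
  cases x <;> cases y <;> simp_all

theorem combine (hn3 : 3 ≤ n) (h1 : ν 1 = false)
    (hper : ∀ k, ν (2 + k) = ν (2 + k % n))
    (hlast : ν (n + 1) = true) (hc : ν n = true)
    {L : ℕ → Bool} (hL : AdmissibleLeft ν L) {r M : ℕ} (hr1 : 1 ≤ r) (hr2 : r ≤ n)
    (ε : ℕ)
    (HL : ∀ T j, M + 1 ≤ T → 3 ≤ j → j ≤ n + 1 →
      ((nuWord ν j (n + 2 - j)).count true + T * ((nuWord ν 2 n).count true)
        + (nuWord ν 2 r).count true + cnt L ((n + 2 - j) + T * n + r + 1)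
        + (if ν (j - 1) then 1 else 0) + ε) % 2 = 0)
    (HS : ∃ T, M + 2 ≤ T ∧
      (T * ((nuWord ν 2 n).count true) + (nuWord ν 2 r).count true
        + cnt L (T * n + r + 1) + ε) % 2 = 0) : False := by
  obtain ⟨T, hT, hS⟩ := HS
  have hTn : (T - 1) * n + n = T * n := by
    conv_rhs => rw [show T = (T - 1) + 1 by omega]
    rw [Nat.succ_mul]
  have hTC : (T - 1) * ((nuWord ν 2 n).count true) + ((nuWord ν 2 n).count true)
      = T * ((nuWord ν 2 n).count true) := by
    conv_rhs => rw [show T = (T - 1) + 1 by omega]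
    rw [Nat.succ_mul]
  have h2n : 2 * n ≤ T * n := Nat.mul_le_mul_right n (by omega)
  set Y := T * n + r with hY
  -- L (Y+1) = false
  have hLY1 : L (Y + 1) = false := by
    have hB := HL T (n + 1) (by omega) (by omega) le_rfl
    rw [show (n + 2 - (n + 1)) + T * n + r + 1 = Y + 2 by omega] at hB
    rw [show Y + 2 = (Y + 1) + 1 by omega, cnt_succ] at hB
    have hD : (nuWord ν (n + 1) (n + 2 - (n + 1))).count true = 1 := by
      rw [show n + 2 - (n + 1) = 0 + 1 by omega, nuWord_count_cons, hlast]
      simp [nuWord]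
    rw [hD, show n + 1 - 1 = n by omega,
      show (if ν n then 1 else 0 : ℕ) = 1 by simp [hc]] at hB
    exact bv_parity_false (by omega)
  -- L Y = false
  have hLY : L Y = false := by
    have hA3 := HL (T - 1) 3 (by omega) le_rfl (by omega)
    rw [show (n + 2 - 3) + (T - 1) * n + r + 1 = Y by omega] at hA3
    have hCsplit : (nuWord ν 2 n).count true
        = (if ν 2 then 1 else 0) + (nuWord ν 3 (n + 2 - 3)).count true := by
      rw [show n = (n - 1) + 1 by omega, nuWord_count_cons]
      rw [show n - 1 + 1 + 2 - 3 = n - 1 by omega]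
    rw [show (3 : ℕ) - 1 = 2 by omega] at hA3
    rw [cnt_succ] at hS
    exact bv_parity_false (by omega)
  -- L (Y + 2 - j) = ν (j - 1) for 3 ≤ j ≤ n
  have hval : ∀ j, 3 ≤ j → j ≤ n → L (Y + 2 - j) = ν (j - 1) := by
    intro j hj3 hjn
    have hAj := HL (T - 1) j (by omega) hj3 (by omega)
    have hAj1 := HL (T - 1) (j + 1) (by omega) (by omega) (by omega)
    rw [show (n + 2 - j) + (T - 1) * n + r + 1 = (Y + 2 - j) + 1 by omega] at hAj
    rw [show (n + 2 - (j + 1)) + (T - 1) * n + r + 1 = Y + 2 - j by omega] at hAj1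
    rw [cnt_succ] at hAj
    have hDsplit : (nuWord ν j (n + 2 - j)).count true
        = (if ν j then 1 else 0) + (nuWord ν (j + 1) (n + 2 - (j + 1))).count true := by
      rw [show n + 2 - j = (n + 2 - (j + 1)) + 1 by omega, nuWord_count_cons]
    rw [show j + 1 - 1 = j by omega] at hAj1
    rw [hDsplit] at hAj
    exact bv_parity_eq (by omega)
  -- assemble the forbidden word
  have hword : leftWord L (Y + 2 - n) n = [false, false] ++ nuWord ν 2 (n - 2) := by
    apply List.ext_getElem
    · rw [leftWord_length]
      simp [nuWord_length]
      omega
    · intro i hi1 hi2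
      rw [leftWord_length] at hi1
      rw [← List.getD_eq_getElem _ false, ← List.getD_eq_getElem _ false,
        leftWord_getD _ hi1]
      rcases Nat.lt_or_ge i 2 with hi | hi
      · interval_cases i
        · rw [show Y + 2 - n + (n - 1 - 0) = Y + 1 by omega, hLY1]
          simp
        · rw [show Y + 2 - n + (n - 1 - 1) = Y by omega, hLY]
          simp
      · obtain ⟨i', rfl⟩ : ∃ i', i = i' + 2 := ⟨i - 2, by omega⟩
        rw [show Y + 2 - n + (n - 1 - (i' + 2)) = Y + 2 - (i' + 3) by omega]
        rw [hval (i' + 3) (by omega) (by omega)]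
        rw [show ([false, false] ++ nuWord ν 2 (n - 2) : List Bool)
          = false :: false :: nuWord ν 2 (n - 2) by simp]
        rw [getD_cons_succ' _ _ (i' + 1), getD_cons_succ' _ _ i',
          nuWord_getD ν (by omega)]
        congr 1
        omega
  have hfinal := hL (Y + 2 - n) n
  rw [hword] at hfinal
  exact not_adm_word (by omega) h1 hc hfinal

end Combine
/-- Let `ν = 10(c_3…c_{n+2})^∞` with `#₁(c_3…c_{n+2})` odd, `c_{n+2} = 1` and
`c_{n+1} = 1`, and suppose all the words
`c_j^*c_{j+1}…c_{n+2}(c_3…c_{n+2})^M c_3…c_i` are admissible. Then no choice of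
`L` makes any folding point of `X'` a Type 3 folding point; in particular the
candidate sequence `L = (c_3…c_n00)^∞ l_k…l_1` contains the non-admissible
subword `00c_3…c_n`. -/
theorem no_type3_of_cnplus1_one (ν : ℕ → Bool) (hν : AdmissibleSeq ν)
    (n : ℕ) (hn : 1 ≤ n)
    (h0 : ν 0 = true) (h1 : ν 1 = false)
    (hper : ∀ k, ν (2 + k) = ν (2 + k % n))
    (hlast : ν (n + 1) = true)
    (hodd : Odd ((nuWord ν 2 n).count true))
    (hc : ν n = true)
    (hadm : ∀ j M r, 3 ≤ j → j ≤ n + 1 → 1 ≤ M → 1 ≤ r → r ≤ n →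
      AdmissibleWord ν (fwLong ν n j M r)) :
    (∀ L : ℕ → Bool, AdmissibleLeft ν L → ∀ r, 1 ≤ r → r ≤ n →
        ¬ Type3Cond ν n L r) ∧
      ¬ AdmissibleWord ν ([false, false] ++ nuWord ν 2 (n - 2)) := by

  have hn3 : 3 ≤ n := by
    by_contra hcon
    push_neg at hcon
    interval_cases n
    · rw [hc] at h1; exact absurd h1 (by simp)
    · have : nuWord ν 2 2 = [ν 2, ν 3] := by
        simp [nuWord, List.range_succ]
      rw [this] at hodd
      rw [hc, hlast] at hodd
      exact absurd hodd (by decide)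
  have hna := not_adm_word (n := n) (by omega) h1 hc
  refine ⟨?_, hna⟩
  intro L hL r hr1 hr2 hT3
  obtain ⟨M, hM, hbr⟩ := hT3
  rcases hbr with ⟨hlong, hsideE, _⟩ | ⟨hlong, hsideE, _⟩
  · refine combine hn3 h1 hper hlast hc hL (M := M) hr1 hr2 0 ?_ ?_
    · intro T j hT hj3 hjn
      have hadmw : AdmissibleWord ν (fwLong ν n j T r) :=
        hadm j T r hj3 hjn (by omega) hr1 hr2
      have hlt := hlong (T - M) j (by omega) hj3 hjn
      rw [show M + (T - M) = T by omega] at hlt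
      have hlt' := hlt hadmw (extw (fwLong ν n j T r))
        (AdmissibleLeft_extw h0 h1 hadmw) (extw_ends _)
      have := long_extract₁ hper hj3 hjn hr1 hr2 hlt'
      simpa using this
    · obtain ⟨N', hN'2, _, hcl⟩ := hsideE 2
      have hsadm : AdmissibleWord ν (fwSide ν n (M + N') r) := by
        rw [fwSide_eq_nuWord hper (by omega) h1 hr2]
        exact hν 1 _
      have hlt := hcl (extw (fwSide ν n (M + N') r))
        (AdmissibleLeft_extw h0 h1 hsadm) (extw_ends _)
      refine ⟨M + N', by omega, ?_⟩
      have := side_extract₁ hper (by omega) hlast hr1 hr2 hlt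
      simpa using this
  · refine combine hn3 h1 hper hlast hc hL (M := M) hr1 hr2 1 ?_ ?_
    · intro T j hT hj3 hjn
      have hadmw : AdmissibleWord ν (fwLong ν n j T r) :=
        hadm j T r hj3 hjn (by omega) hr1 hr2
      have hlt := hlong (T - M) j (by omega) hj3 hjn
      rw [show M + (T - M) = T by omega] at hlt
      have hlt' := hlt hadmw (extw (fwLong ν n j T r))
        (AdmissibleLeft_extw h0 h1 hadmw) (extw_ends _)
      exact long_extract₂ hper hj3 hjn hr1 hr2 hlt'
    · obtain ⟨N', hN'2, _, hcl⟩ := hsideE 2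
      have hsadm : AdmissibleWord ν (fwSide ν n (M + N') r) := by
        rw [fwSide_eq_nuWord hper (by omega) h1 hr2]
        exact hν 1 _
      have hlt := hcl (extw (fwSide ν n (M + N') r))
        (AdmissibleLeft_extw h0 h1 hsadm) (extw_ends _)
      refine ⟨M + N', by omega, ?_⟩
      exact side_extract₂ hper (by omega) hlast hr1 hr2 hlt
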